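/- Let m ≥ 2, let K be a nontrivial normal subgroup of the free group F_m, let W'(n) be the number of elements of K of reduced word length n, and let η = limsup_{n→∞, n even} (1/n)·log_{2m-1} W'(n) be the cogrowth exponent of G = F_m/K. Then for every even integer ℓ ≥ 2 one has the exact (not merely asymptotic) bound W'(ℓ) ≤ (2m-1)^{ηℓ + 2}. -/

import Mathlib

open Filter

/-- The free group on `m` generators. -/
abbrev FG (m : ℕ) := FreeGroup (Fin m)

/-- `W'_K(n)`: the number of elements of `K` of reduced word length `n`. -/
noncomputable def Wred (m : ℕ) (K : Subgroup (FG m)) (n : ℕ) : ℕ :=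
  Nat.card {w : FG m // w ∈ K ∧ FreeGroup.norm w = n}

/-- The filter of even natural numbers tending to infinity. -/
def evenAtTop : Filter ℕ := Filter.atTop ⊓ Filter.principal {L | Even L}

set_option linter.unusedSectionVars false

open Topology

section Aux

open List Mathlib

namespace CG



variable {α : Type*} [DecidableEq α]

/-- Non-cancellation predicate on adjacent letters. -/
def NC (a b : α × Bool) : Prop := ¬(a.1 = b.1 ∧ a.2 = !b.2)

instance : DecidableRel (NC (α := α)) := fun a b => by unfold NC; infer_instance

instance (l : List (α × Bool)) : Decidable (Chain' NC l) :=
  inferInstanceAs (Decidable (IsChain NC l))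

lemma nc_iff {a b : α × Bool} : NC a b ↔ a ≠ (b.1, !b.2) := by
  unfold NC
  constructor
  · rintro h rfl; exact h ⟨rfl, rfl⟩
  · rintro h ⟨h1, h2⟩; apply h; ext <;> simp [h1, h2]

lemma reduce_eq_self_of_chain' : ∀ {L : List (α × Bool)}, Chain' NC L →
    FreeGroup.reduce L = L := by
  intro L
  induction L with
  | nil => intro; rfl
  | cons x t ih =>
    intro h
    have ht : FreeGroup.reduce t = t := ih h.tail
    rw [FreeGroup.reduce.cons, ht]
    cases t with
    | nil => rfl
    | cons b t' =>
      have : ¬(x.1 = b.1 ∧ x.2 = !b.2) := (isChain_cons_cons.mp h).1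
      simp [this]

lemma chain'_of_reduce_eq_self : ∀ {L : List (α × Bool)}, FreeGroup.reduce L = L →
    Chain' NC L := by
  intro L
  induction L with
  | nil => intro; exact isChain_nil
  | cons x t ih =>
    intro h
    cases t with
    | nil => exact isChain_singleton _
    | cons b t' =>
      -- first show reduce (b :: t') = b :: t'
      have hred : FreeGroup.reduce (b :: t') = b :: t' := by
        by_contra hne
        have hlen : (FreeGroup.reduce (b :: t')).length ≤ (b :: t').length :=
          FreeGroup.reduce.red.length_le
        rw [FreeGroup.reduce.cons] at h
        cases hr : FreeGroup.reduce (b :: t') with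
        | nil => rw [hr] at h; simp at h
        | cons hd tl =>
          rw [hr] at h hlen
          by_cases hc : x.1 = hd.1 ∧ x.2 = !hd.2
          · simp only [hc, and_self, if_true] at h
            -- h : tl = x :: b :: t'
            simp [h] at hlen
          · simp only [hc, if_false, List.cons.injEq] at h
            exact hne (by rw [hr, h.2.1, h.2.2])
      have hchain : Chain' NC (b :: t') := ih hred
      refine isChain_cons_cons.mpr ⟨?_, hchain⟩
      -- head condition
      rw [FreeGroup.reduce.cons, hred] at h
      by_cases hc : x.1 = b.1 ∧ x.2 = !b.2
      · simp only [hc, and_self, if_true] at h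
        have := congrArg List.length h
        simp at this
        omega
      · exact hc


variable [Fintype α]

/-- The finset of (codes of) reduced words of length `n`. -/
def S (α : Type*) [DecidableEq α] [Fintype α] (n : ℕ) : Finset (List.Vector (α × Bool) n) :=
  Finset.univ.filter (fun v => Chain' NC v.toList)

lemma card_S_succ (n : ℕ) :
    (S α (n + 2)).card ≤ (S α (n + 1)).card * (2 * Fintype.card α - 1) := by
  have himg : (S α (n+2)).image (List.Vector.tail : List.Vector (α × Bool) (n+2) → List.Vector (α × Bool) (n+1)) ⊆ S α (n+1) := by
    intro t ht
    simp only [Finset.mem_image] at ht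
    obtain ⟨v, hv, rfl⟩ := ht
    simp only [S, Finset.mem_filter, Finset.mem_univ, true_and] at hv ⊢
    have : (List.Vector.tail v).toList = v.toList.tail := List.Vector.tail_val v
    rw [this]
    exact hv.tail
  calc (S α (n+2)).card
      ≤ (2 * Fintype.card α - 1) * ((S α (n+2)).image (List.Vector.tail : List.Vector (α × Bool) (n+2) → List.Vector (α × Bool) (n+1))).card := by
        apply Finset.card_le_mul_card_image
        intro t _
        have key : ((S α (n + 2)).filter (fun v => v.tail = t)).card ≤
            (Finset.univ.erase ((t.head.1, !t.head.2))).card := by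
          apply Finset.card_le_card_of_injOn (fun v => v.head)
          · intro v hv
            simp only [S, Finset.mem_coe, Finset.mem_filter, Finset.mem_univ, true_and] at hv
            obtain ⟨hchain, htail⟩ := hv
            rw [Finset.mem_coe, Finset.mem_erase]
            refine ⟨?_, Finset.mem_univ _⟩
            have hlist : v.toList = v.head :: (t.head :: t.tail.toList) := by
              conv_lhs => rw [← List.Vector.cons_head_tail v]
              rw [List.Vector.toList_cons, htail]
              conv_lhs => rw [← List.Vector.cons_head_tail t]
              rw [List.Vector.toList_cons]
            rw [hlist] at hchain
            have hnc : NC v.head t.head := (isChain_cons_cons.mp hchain).1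
            intro heq
            exact hnc (by simp only at heq; rw [heq]; exact ⟨rfl, rfl⟩)
          · intro v hv w hw hvw
            simp only [Finset.mem_coe, Finset.mem_filter] at hv hw
            simp only at hvw
            rw [← List.Vector.cons_head_tail v, ← List.Vector.cons_head_tail w, hvw, hv.2, hw.2]
        calc ((S α (n + 2)).filter (fun v => v.tail = t)).card
            ≤ (Finset.univ.erase ((t.head.1, !t.head.2))).card := key
          _ = 2 * Fintype.card α - 1 := by
              rw [Finset.card_erase_of_mem (Finset.mem_univ _), Finset.card_univ]
              simp [Fintype.card_prod, Nat.mul_comm]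
      _ ≤ (2 * Fintype.card α - 1) * (S α (n+1)).card :=
          Nat.mul_le_mul_left _ (Finset.card_le_card himg)
      _ = (S α (n+1)).card * (2 * Fintype.card α - 1) := Nat.mul_comm _ _

lemma card_S_le (n : ℕ) (hn : 1 ≤ n) :
    (S α n).card ≤ 2 * Fintype.card α * (2 * Fintype.card α - 1) ^ (n - 1) := by
  induction n with
  | zero => omega
  | succ n ih =>
    match n, ih with
    | 0, _ =>
      calc (S α 1).card ≤ (Finset.univ : Finset (List.Vector (α × Bool) 1)).card :=
            Finset.card_le_card (Finset.filter_subset _ _)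
        _ = 2 * Fintype.card α := by
            rw [Finset.card_univ]
            simp [Fintype.card_prod, Nat.mul_comm]
        _ ≤ _ := by simp
    | n + 1, ih =>
      calc (S α (n+2)).card ≤ (S α (n+1)).card * (2 * Fintype.card α - 1) := card_S_succ n
        _ ≤ 2 * Fintype.card α * (2 * Fintype.card α - 1) ^ (n+1-1) * (2 * Fintype.card α - 1) :=
            Nat.mul_le_mul_right _ (ih (by omega))
        _ = 2 * Fintype.card α * (2 * Fintype.card α - 1) ^ (n + 2 - 1) := by
            rw [Nat.mul_assoc, ← pow_succ]
            norm_num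



lemma chain'_toWord (w : FreeGroup α) : Chain' NC w.toWord :=
  chain'_of_reduce_eq_self (FreeGroup.reduce_toWord w)

lemma invRev_singleton (s : α × Bool) :
    FreeGroup.invRev [s] = [(s.1, !s.2)] := by
  simp [FreeGroup.invRev]

/-- The key concatenation lemma. -/
lemma toWord_conj_concat (u v : FreeGroup α) (s : α × Bool)
    (hV : v.toWord ≠ [])
    (h1 : ∀ x ∈ u.toWord.getLast?, NC x s)
    (h2 : ∀ y ∈ v.toWord.head?, NC s y)
    (h3 : ∀ x ∈ v.toWord.getLast?, NC x (s.1, !s.2)) :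
    (u * FreeGroup.mk [s] * v * (FreeGroup.mk [s])⁻¹).toWord
      = u.toWord ++ s :: (v.toWord ++ [(s.1, !s.2)]) := by
  have hw : u * FreeGroup.mk [s] * v * (FreeGroup.mk [s])⁻¹
      = FreeGroup.mk (u.toWord ++ s :: (v.toWord ++ [(s.1, !s.2)])) := by
    conv_lhs => rw [← FreeGroup.mk_toWord (x := u), ← FreeGroup.mk_toWord (x := v)]
    rw [FreeGroup.inv_mk, invRev_singleton, FreeGroup.mul_mk, FreeGroup.mul_mk,
      FreeGroup.mul_mk]
    congr 1
    simp
  rw [hw, FreeGroup.toWord_mk]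
  apply reduce_eq_self_of_chain'
  refine isChain_append.mpr ?_
  refine ⟨chain'_toWord u, ?_, ?_⟩
  · refine isChain_cons.mpr ?_
    constructor
    · intro y hy
      cases hvw : v.toWord with
      | nil => exact absurd hvw hV
      | cons z V' =>
        rw [hvw] at hy
        simp only [cons_append, head?_cons, Option.mem_some_iff] at hy
        subst hy
        exact h2 _ (by rw [hvw]; simp)
    · refine isChain_append.mpr ?_
      refine ⟨chain'_toWord v, isChain_singleton _, ?_⟩
      intro x hx y hy
      simp only [head?_cons, Option.mem_some_iff] at hy
      subst hy
      exact h3 _ hx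
  · intro x hx y hy
    simp only [head?_cons, Option.mem_some_iff] at hy
    subst hy
    exact h1 _ hx

lemma exists_good_letter (hα : 2 ≤ Fintype.card α) (b1 b2 b3 : α × Bool) :
    ∃ s : α × Bool, s ≠ b1 ∧ s ≠ b2 ∧ s ≠ b3 := by
  by_contra h
  push_neg at h
  have hsub : (Finset.univ : Finset (α × Bool)) ⊆ {b1, b2, b3} := by
    intro s _
    simp only [Finset.mem_insert, Finset.mem_singleton]
    by_cases h1 : s = b1
    · exact Or.inl h1
    by_cases h2 : s = b2
    · exact Or.inr (Or.inl h2)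
    exact Or.inr (Or.inr (h s h1 h2))
  have := Finset.card_le_card hsub
  have h3 : ({b1, b2, b3} : Finset (α × Bool)).card ≤ 3 := by
    apply le_trans (Finset.card_insert_le _ _)
    have := Finset.card_insert_le b2 ({b3} : Finset (α × Bool))
    simp at this ⊢
    omega
  rw [Finset.card_univ, Fintype.card_prod, Fintype.card_bool] at this
  omega

lemma finite_norm (K : Subgroup (FreeGroup α)) (n : ℕ) :
    Finite {w : FreeGroup α // w ∈ K ∧ FreeGroup.norm w = n} := by
  have hinj : Function.Injective
      (fun w : {w : FreeGroup α // w ∈ K ∧ FreeGroup.norm w = n} =>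
        (⟨w.val.toWord, w.prop.2⟩ : List.Vector (α × Bool) n)) := by
    intro w w' h
    simp only [Subtype.mk.injEq] at h
    exact Subtype.ext (FreeGroup.toWord_injective (congrArg Subtype.val h))
  have : Finite {l : List (α × Bool) // l.length = n} :=
    inferInstanceAs (Finite (List.Vector (α × Bool) n))
  exact Finite.of_injective _ hinj

lemma Wcard_le (K : Subgroup (FreeGroup α)) (n : ℕ) (hn : 1 ≤ n) :
    Nat.card {w : FreeGroup α // w ∈ K ∧ FreeGroup.norm w = n}
      ≤ 2 * Fintype.card α * (2 * Fintype.card α - 1) ^ (n - 1) := by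
  have : Nat.card {w : FreeGroup α // w ∈ K ∧ FreeGroup.norm w = n}
      ≤ Nat.card {v : List.Vector (α × Bool) n // v ∈ S α n} := by
    apply Nat.card_le_card_of_injective
      (fun w => (⟨⟨w.val.toWord, w.prop.2⟩, by
        simp only [S, Finset.mem_filter, Finset.mem_univ, true_and]
        exact Finset.mem_filter.mpr ⟨Finset.mem_univ _, chain'_toWord w.val⟩⟩ : {v : List.Vector (α × Bool) n // v ∈ S α n}))
    intro w w' h
    simp only [Subtype.mk.injEq, Subtype.mk.injEq] at h
    exact Subtype.ext (FreeGroup.toWord_injective (congrArg (fun x => x.1.1) h))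
  refine le_trans this ?_
  rw [Nat.card_eq_fintype_card, Fintype.card_coe]
  exact card_S_le n hn

lemma super (K : Subgroup (FreeGroup α)) [K.Normal] (hα : 2 ≤ Fintype.card α)
    (a b : ℕ) (ha : 1 ≤ a) (hb : 1 ≤ b) :
    Nat.card {w : FreeGroup α // w ∈ K ∧ FreeGroup.norm w = a} *
      Nat.card {w : FreeGroup α // w ∈ K ∧ FreeGroup.norm w = b} ≤
    Nat.card {w : FreeGroup α // w ∈ K ∧ FreeGroup.norm w = a + b + 2} := by
  have hfin := finite_norm K (a + b + 2)
  rw [← Nat.card_prod]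
  -- choice of letter
  have hs : ∀ u v : FreeGroup α, u.toWord ≠ [] → v.toWord ≠ [] →
      ∃ s : α × Bool, (u * FreeGroup.mk [s] * v * (FreeGroup.mk [s])⁻¹).toWord
        = u.toWord ++ s :: (v.toWord ++ [(s.1, !s.2)]) := by
    intro u v hU hV
    set x := u.toWord.getLast hU with hxdef
    set y := v.toWord.head hV with hydef
    set z := v.toWord.getLast hV with hzdef
    obtain ⟨s, hs1, hs2, hs3⟩ := exists_good_letter hα (x.1, !x.2) (y.1, !y.2) z
    refine ⟨s, toWord_conj_concat u v s hV ?_ ?_ ?_⟩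
    · intro x' hx'
      rw [List.getLast?_eq_getLast hU, Option.mem_some_iff] at hx'
      subst hx'
      rintro ⟨e1, e2⟩
      exact hs1 (Prod.ext e1.symm (by rw [e2, Bool.not_not]))
    · intro y' hy'
      rw [List.head?_eq_head hV, Option.mem_some_iff] at hy'
      subst hy'
      rintro ⟨e1, e2⟩
      exact hs2 (Prod.ext e1 e2)
    · intro z' hz'
      rw [List.getLast?_eq_getLast hV, Option.mem_some_iff] at hz'
      subst hz'
      rintro ⟨e1, e2⟩
      exact hs3 (Prod.ext e1.symm (e2.trans (Bool.not_not _)).symm)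
  have hnz : ∀ (k : ℕ), 1 ≤ k → ∀ w : FreeGroup α, FreeGroup.norm w = k → w.toWord ≠ [] := by
    intro k hk w hw hnil
    rw [FreeGroup.norm, hnil] at hw
    simp at hw
    omega
  classical
  set sel : {w : FreeGroup α // w ∈ K ∧ FreeGroup.norm w = a} ×
      {w : FreeGroup α // w ∈ K ∧ FreeGroup.norm w = b} → (α × Bool) := fun p =>
    (hs p.1.val p.2.val (hnz a ha _ p.1.prop.2) (hnz b hb _ p.2.prop.2)).choose with hseldef
  have hsel : ∀ p, (p.1.val * FreeGroup.mk [sel p] * p.2.val * (FreeGroup.mk [sel p])⁻¹).toWord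
      = p.1.val.toWord ++ (sel p) :: (p.2.val.toWord ++ [((sel p).1, !(sel p).2)]) := fun p =>
    (hs p.1.val p.2.val (hnz a ha _ p.1.prop.2) (hnz b hb _ p.2.prop.2)).choose_spec
  have hlen1 : ∀ w : FreeGroup α, w.toWord.length = FreeGroup.norm w := fun _ => rfl
  apply Nat.card_le_card_of_injective
    (fun p => (⟨p.1.val * FreeGroup.mk [sel p] * p.2.val * (FreeGroup.mk [sel p])⁻¹, by
      have hc := (‹K.Normal›).conj_mem _ p.2.prop.1 (FreeGroup.mk [sel p])
      have := mul_mem p.1.prop.1 hc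
      simpa [mul_assoc] using this, by
      rw [FreeGroup.norm, hsel p]
      simp only [List.length_append, List.length_cons, List.length_singleton,
        List.length_nil]
      have h1 := (hlen1 p.1.val).trans p.1.prop.2
      have h2 := (hlen1 p.2.val).trans p.2.prop.2
      omega⟩ :
      {w : FreeGroup α // w ∈ K ∧ FreeGroup.norm w = a + b + 2}))
  intro p q h
  have hval := congrArg (fun w : {w : FreeGroup α // w ∈ K ∧ FreeGroup.norm w = a + b + 2} =>
    w.val.toWord) h
  simp only at hval
  rw [hsel p, hsel q] at hval
  have hlena : p.1.val.toWord.length = q.1.val.toWord.length := by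
    rw [hlen1, hlen1, p.1.prop.2, q.1.prop.2]
  obtain ⟨hU, hrest⟩ := List.append_inj hval hlena
  rw [List.cons.injEq] at hrest
  obtain ⟨-, hrest2⟩ := hrest
  have hlenb : p.2.val.toWord.length = q.2.val.toWord.length := by
    rw [hlen1, hlen1, p.2.prop.2, q.2.prop.2]
  obtain ⟨hV, -⟩ := List.append_inj hrest2 hlenb
  have e1 : p.1 = q.1 := Subtype.ext (FreeGroup.toWord_injective hU)
  have e2 : p.2 = q.2 := Subtype.ext (FreeGroup.toWord_injective hV)
  exact Prod.ext e1 e2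

end CG


open CG in
lemma wred_super (m : ℕ) (hm : 2 ≤ m) (K : Subgroup (FG m)) [K.Normal] {a b : ℕ}
    (ha : 1 ≤ a) (hb : 1 ≤ b) :
    Wred m K a * Wred m K b ≤ Wred m K (a + b + 2) := by
  have h := CG.super (α := Fin m) K (by simpa using hm) a b ha hb
  simpa [Wred] using h

open CG in
lemma wred_le (m : ℕ) (K : Subgroup (FG m)) {n : ℕ} (hn : 1 ≤ n) :
    Wred m K n ≤ 2 * m * (2 * m - 1) ^ (n - 1) := by
  have h := CG.Wcard_le (α := Fin m) K n hn
  simpa [Wred] using h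

end Aux

/-- **Exact cogrowth bound.** For a nontrivial normal subgroup `K` of the free
group `F_m` (`m ≥ 2`) with cogrowth exponent
`η = limsup_{n→∞, n even} (1/n)·log_{2m-1} W'(n)`, one has the exact (not
merely asymptotic) bound `W'(ℓ) ≤ (2m-1)^{ηℓ+2}` for every even `ℓ ≥ 2`. -/
theorem Wred_le_of_cogrowth
    (m : ℕ) (hm : 2 ≤ m) (K : Subgroup (FG m)) [K.Normal] (hK : K ≠ ⊥)
    (η : ℝ)
    (hη : η = limsup
      (fun n : ℕ => (1 / (n : ℝ)) * Real.logb (2 * (m : ℝ) - 1) (Wred m K n))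
      evenAtTop)
    (ℓ : ℕ) (hℓeven : Even ℓ) (hℓ : 2 ≤ ℓ) :
    (Wred m K ℓ : ℝ) ≤ (2 * (m : ℝ) - 1) ^ (η * ℓ + 2) := by
  classical
  have hm1 : (2:ℝ) ≤ (m:ℝ) := by exact_mod_cast hm
  set q : ℝ := 2 * (m : ℝ) - 1 with hqdef
  have hq : 1 < q := by rw [hqdef]; linarith
  have hq0 : 0 < q := zero_lt_one.trans hq
  have hcast : ((2 * m - 1 : ℕ) : ℝ) = q := by
    rw [Nat.cast_sub (by omega : (1:ℕ) ≤ 2 * m)]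
    push_cast
    rw [hqdef]
  -- crude upper bound
  have hWle : ∀ n : ℕ, 1 ≤ n → (Wred m K n : ℝ) ≤ q ^ (n + 1) := by
    intro n hn
    have h1 : Wred m K n ≤ 2 * m * (2 * m - 1) ^ (n - 1) := wred_le m K hn
    have h2 : (Wred m K n : ℝ) ≤ (2 * (m:ℝ)) * ((2 * m - 1 : ℕ) : ℝ) ^ (n - 1) := by
      exact_mod_cast h1
    have h3 : (2 * (m:ℝ)) ≤ q ^ 2 := by rw [hqdef]; nlinarith
    calc (Wred m K n : ℝ) ≤ (2 * (m:ℝ)) * q ^ (n - 1) := by rw [← hcast]; exact h2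
      _ ≤ q ^ 2 * q ^ (n - 1) := by
          apply mul_le_mul_of_nonneg_right h3 (pow_nonneg hq0.le _)
      _ = q ^ (n + 1) := by rw [← pow_add]; congr 1; omega
  have hlogb : ∀ n : ℕ, 1 ≤ n → Real.logb q (Wred m K n) ≤ n + 1 := by
    intro n hn
    rcases Nat.eq_zero_or_pos (Wred m K n) with h | h
    · rw [h]; simp only [Nat.cast_zero, Real.logb_zero]; positivity
    · have hpos : (0:ℝ) < (Wred m K n : ℝ) := by exact_mod_cast h
      calc Real.logb q (Wred m K n) ≤ Real.logb q (q ^ (n+1)) :=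
            Real.logb_le_logb_of_le hq hpos (hWle n hn)
        _ = (n + 1 : ℕ) * Real.logb q q := Real.logb_pow q q (n+1)
        _ = n + 1 := by rw [Real.logb_self_eq_one hq]; push_cast; ring
  set f : ℕ → ℝ := fun n : ℕ => (1 / (n : ℝ)) * Real.logb q (Wred m K n) with hfdef
  have hf2 : ∀ n, f n ≤ 2 := by
    intro n
    match n with
    | 0 => simp [hfdef]
    | (n+1) =>
      have hp : (0:ℝ) < ((n:ℝ) + 1) := by positivity
      have : f (n+1) ≤ (1 / ((n:ℝ)+1)) * ((n:ℝ) + 1 + 1) := by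
        rw [hfdef]
        have hl := hlogb (n+1) (by omega)
        push_cast at hl ⊢
        apply mul_le_mul_of_nonneg_left hl (by positivity)
      refine this.trans ?_
      rw [one_div, inv_mul_le_iff₀ hp]
      linarith
  -- trivial case
  rcases Nat.eq_zero_or_pos (Wred m K ℓ) with hN | hN
  · rw [hN]
    simp only [Nat.cast_zero]
    exact Real.rpow_nonneg hq0.le _
  -- main case
  have hNpos : (0:ℝ) < (Wred m K ℓ : ℝ) := by exact_mod_cast hN
  set L : ℝ := Real.logb q (Wred m K ℓ) with hLdef
  have hL0 : 0 ≤ L := Real.logb_nonneg hq (by exact_mod_cast hN)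
  have hLle : L ≤ (ℓ:ℝ) + 1 := hlogb ℓ (by omega)
  set g : ℕ → ℕ := fun k => ℓ + k * (ℓ + 2) with hgdef
  have hiter : ∀ k : ℕ, Wred m K ℓ ^ (k+1) ≤ Wred m K (g k) := by
    intro k
    induction k with
    | zero => simp [hgdef]
    | succ k ih =>
      have hgk : 1 ≤ g k := by simp only [hgdef]; omega
      have hsup := wred_super m hm K (a := g k) (b := ℓ) hgk (by omega)
      have hgsucc : g (k+1) = g k + ℓ + 2 := by simp only [hgdef]; ring
      calc Wred m K ℓ ^ (k+2) = Wred m K ℓ ^ (k+1) * Wred m K ℓ := by ring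
        _ ≤ Wred m K (g k) * Wred m K ℓ := Nat.mul_le_mul_right _ ih
        _ ≤ Wred m K (g k + ℓ + 2) := hsup
        _ = Wred m K (g (k+1)) := by rw [hgsucc]
  have hgpos : ∀ k : ℕ, (0:ℝ) < ((g k : ℕ) : ℝ) := by
    intro k
    have : 1 ≤ g k := by simp only [hgdef]; omega
    exact_mod_cast this
  have hfg : ∀ k : ℕ, L * (((k:ℝ)+1) / ((g k : ℕ) : ℝ)) ≤ f (g k) := by
    intro k
    have h1 : ((Wred m K ℓ : ℝ)) ^ (k+1) ≤ (Wred m K (g k) : ℝ) := by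
      exact_mod_cast hiter k
    have h2 : Real.logb q ((Wred m K ℓ : ℝ) ^ (k+1)) ≤ Real.logb q (Wred m K (g k)) :=
      Real.logb_le_logb_of_le hq (by positivity) h1
    rw [Real.logb_pow] at h2
    have h3 : ((k:ℝ)+1) * L ≤ Real.logb q (Wred m K (g k)) := by
      rw [hLdef]; push_cast at h2 ⊢; linarith
    have h4 : (0:ℝ) ≤ 1 / ((g k : ℕ) : ℝ) := by positivity
    calc L * (((k:ℝ)+1) / ((g k : ℕ) : ℝ))
        = (1 / ((g k : ℕ) : ℝ)) * (((k:ℝ)+1) * L) := by ring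
      _ ≤ (1 / ((g k : ℕ) : ℝ)) * Real.logb q (Wred m K (g k)) :=
          mul_le_mul_of_nonneg_left h3 h4
      _ = f (g k) := rfl
  -- limit of the lower bound sequence
  have hl2 : (0:ℝ) < (ℓ:ℝ) + 2 := by positivity
  have hratio : Tendsto (fun k : ℕ => ((k:ℝ)+1) / ((g k : ℕ) : ℝ)) atTop
      (𝓝 (1 / ((ℓ:ℝ)+2))) := by
    have h1 : Tendsto (fun k : ℕ => 1 + 1/(k:ℝ)) atTop (𝓝 1) := by
      simpa using (tendsto_const_nhds (x := (1:ℝ))).add tendsto_one_div_atTop_nhds_zero_nat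
    have h2 : Tendsto (fun k : ℕ => (ℓ:ℝ) * (1/(k:ℝ)) + ((ℓ:ℝ)+2)) atTop
        (𝓝 ((ℓ:ℝ)+2)) := by
      have := (tendsto_one_div_atTop_nhds_zero_nat.const_mul (ℓ:ℝ)).add
        (tendsto_const_nhds (x := (ℓ:ℝ)+2))
      simpa using this
    have h3 := h1.div h2 (ne_of_gt hl2)
    have h4 : (1:ℝ) / ((ℓ:ℝ)+2) = 1 / (0 + ((ℓ:ℝ)+2)) := by norm_num
    apply Tendsto.congr' ?_ (by simpa using h3)
    filter_upwards [eventually_ge_atTop 1] with k hk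
    have hk0 : ((k:ℝ)) ≠ 0 := by
      have : (1:ℝ) ≤ (k:ℝ) := by exact_mod_cast hk
      linarith
    have hgk : ((g k : ℕ) : ℝ) = (ℓ:ℝ) + (k:ℝ) * ((ℓ:ℝ)+2) := by
      simp only [hgdef]; push_cast; ring
    rw [hgk, Pi.div_apply]
    rw [div_eq_div_iff (by positivity) (by positivity)]
    field_simp
    try tauto
  have hc : Tendsto (fun k : ℕ => L * (((k:ℝ)+1) / ((g k : ℕ) : ℝ))) atTop
      (𝓝 (L / ((ℓ:ℝ)+2))) := by
    have := hratio.const_mul L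
    simpa [mul_one_div, div_eq_mul_inv] using this
  -- the subsequence tends to evenAtTop
  have hmap : Tendsto g atTop evenAtTop := by
    rw [evenAtTop, tendsto_inf]
    constructor
    · apply tendsto_atTop_mono (f := fun k : ℕ => k)
      · intro k
        simp only [hgdef]
        nlinarith
      · exact tendsto_id
    · rw [tendsto_principal]
      apply Eventually.of_forall
      intro k
      have h1 : Even (ℓ + 2) := hℓeven.add even_two
      exact hℓeven.add (h1.mul_left k)
  -- lower bound for η
  have hbdd : IsBoundedUnder (· ≤ ·) evenAtTop f :=
    isBoundedUnder_of ⟨2, hf2⟩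
  have heta : L / ((ℓ:ℝ)+2) ≤ η := by
    by_contra hcon
    push_neg at hcon
    set ε : ℝ := (L / ((ℓ:ℝ)+2) - η) / 2 with hεdef
    have hε : 0 < ε := by rw [hεdef]; linarith
    have hev : ∀ᶠ k : ℕ in atTop, L / ((ℓ:ℝ)+2) - ε ≤ L * (((k:ℝ)+1) / ((g k : ℕ) : ℝ)) :=
      hc.eventually (eventually_ge_nhds (by linarith))
    have hev2 : ∀ᶠ k : ℕ in atTop, L / ((ℓ:ℝ)+2) - ε ≤ f (g k) := by
      filter_upwards [hev] with k hk
      exact hk.trans (hfg k)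
    have hfreq : ∃ᶠ n in evenAtTop, L / ((ℓ:ℝ)+2) - ε ≤ f n :=
      hmap.frequently hev2.frequently
    have := le_limsup_of_frequently_le hfreq hbdd
    rw [← hη] at this
    rw [hεdef] at this
    linarith
  -- conclude
  have hfinal : L ≤ η * (ℓ:ℝ) + 2 := by
    have h1 : L ≤ η * ((ℓ:ℝ)+2) := by
      rw [div_le_iff₀ hl2] at heta
      linarith [heta]
    by_cases hη1 : η ≤ 1
    · nlinarith
    · push_neg at hη1
      have hl0 : (0:ℝ) ≤ (ℓ:ℝ) := by positivity
      nlinarith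
  have := (Real.logb_le_iff_le_rpow hq hNpos).mp hfinal
  exact this
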